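/- Let b, d be real constants and suppose (x_n)_{n≥-1}, (y_n)_{n≥-1} solve the constant-coefficient system with a = c = 1, with x_n ≠ 0 and y_n ≠ 0 for all n. Then for every n ≥ 0, x_{2n-1} = x_{-1}^{1-n}·(x_0·y_{-1}/y_0)^n·∏_{s=0}^{n-1} [(1 + 2s·d·x_{-1}·y_0) / (1 + (2s+1)·b·x_0·y_{-1})] and x_{2n} = x_0^{n+1}·(y_{-1}/(x_{-1}·y_0))^n·∏_{s=0}^{n-1} [(1 + (2s+1)·d·x_{-1}·y_0) / (1 + (2s+2)·b·x_0·y_{-1})], where x_{-1}^{1-n} denotes an integer power of the nonzero real x_{-1}. -/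

import Mathlib

theorem stmt_13 (x y : ℤ → ℝ) (b d : ℝ)
    (hx : ∀ n : ℤ, -1 ≤ n → x n ≠ 0) (hy : ∀ n : ℤ, -1 ≤ n → y n ≠ 0)
    (hda : ∀ n : ℕ, 1 + b * (x n * y ((n : ℤ) - 1)) ≠ 0)
    (hdc : ∀ n : ℕ, 1 + d * (x ((n : ℤ) - 1) * y n) ≠ 0)
    (hxe : ∀ n : ℕ, x ((n : ℤ) + 1) =
      x n * y ((n : ℤ) - 1) / (y n * (1 + b * (x n * y ((n : ℤ) - 1)))))
    (hye : ∀ n : ℕ, y ((n : ℤ) + 1) =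
      x ((n : ℤ) - 1) * y n / (x n * (1 + d * (x ((n : ℤ) - 1) * y n)))) :
    ∀ n : ℕ,
      x (2 * (n : ℤ) - 1) =
        x (-1) ^ (1 - (n : ℤ)) * (x 0 * y (-1) / y 0) ^ n *
          ∏ s ∈ Finset.range n,
            (1 + 2 * (s : ℝ) * d * x (-1) * y 0) /
            (1 + (2 * (s : ℝ) + 1) * b * x 0 * y (-1)) ∧
      x (2 * (n : ℤ)) =
        x 0 ^ (n + 1) * (y (-1) / (x (-1) * y 0)) ^ n *
          ∏ s ∈ Finset.range n,
            (1 + (2 * (s : ℝ) + 1) * d * x (-1) * y 0) /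
            (1 + (2 * (s : ℝ) + 2) * b * x 0 * y (-1)) := by
  set u0 : ℝ := x 0 * y (-1) with hu0
  set v0 : ℝ := x (-1) * y 0 with hv0
  have hxm1 : x (-1) ≠ 0 := hx (-1) (by norm_num)
  have hym1 : y (-1) ≠ 0 := hy (-1) (by norm_num)
  have hxn : ∀ n : ℕ, x n ≠ 0 := fun n => hx n (by omega)
  have hyn : ∀ n : ℕ, y n ≠ 0 := fun n => hy n (by omega)
  have hxn1 : ∀ n : ℕ, x ((n:ℤ) - 1) ≠ 0 := fun n => hx _ (by omega)
  have hyn1 : ∀ n : ℕ, y ((n:ℤ) - 1) ≠ 0 := fun n => hy _ (by omega)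
  have hU : ∀ n : ℕ, 1 + (n:ℝ) * b * u0 ≠ 0 ∧
      x n * y ((n:ℤ) - 1) = u0 / (1 + (n:ℝ) * b * u0) := by
    intro n
    induction n with
    | zero => simp [hu0]
    | succ n ih =>
      obtain ⟨h1, h2⟩ := ih
      have hbn := hda n
      have key : x ((n:ℤ) + 1) * y n = (x n * y ((n:ℤ)-1)) / (1 + b * (x n * y ((n:ℤ)-1))) := by
        rw [hxe n]
        have H : ∀ A Y : ℝ, Y ≠ 0 → 1 + b * A ≠ 0 → A / (Y * (1 + b * A)) * Y = A / (1 + b * A) := by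
          intro A Y hY hA; field_simp
        exact H _ _ (hyn n) hbn
      have hfac : 1 + ((n:ℝ) + 1) * b * u0 = (1 + b * (x n * y ((n:ℤ)-1))) * (1 + (n:ℝ) * b * u0) := by
        rw [h2]; field_simp; ring
      have hne : 1 + ((n:ℝ) + 1) * b * u0 ≠ 0 := by
        rw [hfac]; exact mul_ne_zero hbn h1
      refine ⟨by push_cast; exact hne, ?_⟩
      have e1 : ((n + 1 : ℕ) : ℤ) = (n:ℤ) + 1 := by push_cast; ring
      rw [h2] at hfac
      rw [e1, show (n:ℤ) + 1 - 1 = (n:ℤ) from by ring, key, h2]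
      push_cast
      rw [hfac, div_div, mul_comm]
  have hV : ∀ n : ℕ, 1 + (n:ℝ) * d * v0 ≠ 0 ∧
      x ((n:ℤ) - 1) * y n = v0 / (1 + (n:ℝ) * d * v0) := by
    intro n
    induction n with
    | zero => simp [hv0]
    | succ n ih =>
      obtain ⟨h1, h2⟩ := ih
      have hbn := hdc n
      have key : x ((n:ℤ)+1-1) * y ((n:ℤ)+1) = (x ((n:ℤ)-1) * y n) / (1 + d * (x ((n:ℤ)-1) * y n)) := by
        rw [show (n:ℤ)+1-1 = (n:ℤ) from by ring, hye n]
        have H : ∀ A X : ℝ, X ≠ 0 → 1 + d * A ≠ 0 → X * (A / (X * (1 + d * A))) = A / (1 + d * A) := by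
          intro A X hX hA; field_simp
        exact H _ _ (hxn n) hbn
      have hfac : 1 + ((n:ℝ) + 1) * d * v0 = (1 + d * (x ((n:ℤ)-1) * y n)) * (1 + (n:ℝ) * d * v0) := by
        rw [h2]; field_simp; ring
      have hne : 1 + ((n:ℝ) + 1) * d * v0 ≠ 0 := by
        rw [hfac]; exact mul_ne_zero hbn h1
      refine ⟨by push_cast; exact hne, ?_⟩
      have e1 : ((n + 1 : ℕ) : ℤ) = (n:ℤ) + 1 := by push_cast; ring
      rw [h2] at hfac
      rw [e1, key, h2]
      push_cast
      rw [hfac, div_div, mul_comm]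
  have hodd : ∀ n : ℕ, x (2*(n:ℤ)+1) =
      x (2*(n:ℤ)-1) * ((u0 / (1 + (2*(n:ℝ)+1)*b*u0)) / (v0 / (1 + 2*(n:ℝ)*d*v0))) := by
    intro n
    obtain ⟨_, hu⟩ := hU (2*n+1)
    obtain ⟨_, hv⟩ := hV (2*n)
    have e2 : ((2*n+1:ℕ):ℤ)-1 = 2*(n:ℤ) := by push_cast; ring
    have e1 : ((2*n+1:ℕ):ℤ) = 2*(n:ℤ)+1 := by push_cast; ring
    have e3 : ((2*n:ℕ):ℤ)-1 = 2*(n:ℤ)-1 := by push_cast; ring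
    have e4 : ((2*n:ℕ):ℤ) = 2*(n:ℤ) := by push_cast; ring
    rw [e2, e1] at hu
    rw [e3, e4] at hv
    push_cast at hu hv
    rw [← hu, ← hv]
    have hxo : x (2*(n:ℤ)-1) ≠ 0 := by have := hxn1 (2*n); rwa [e3] at this
    have hyo : y (2*(n:ℤ)) ≠ 0 := by have := hyn (2*n); rwa [e4] at this
    field_simp
  have heven : ∀ n : ℕ, x (2*(n:ℤ)+2) =
      x (2*(n:ℤ)) * ((u0 / (1 + (2*(n:ℝ)+2)*b*u0)) / (v0 / (1 + (2*(n:ℝ)+1)*d*v0))) := by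
    intro n
    obtain ⟨_, hu⟩ := hU (2*n+2)
    obtain ⟨_, hv⟩ := hV (2*n+1)
    have e2 : ((2*n+2:ℕ):ℤ)-1 = 2*(n:ℤ)+1 := by push_cast; ring
    have e1 : ((2*n+2:ℕ):ℤ) = 2*(n:ℤ)+2 := by push_cast; ring
    have e3 : ((2*n+1:ℕ):ℤ)-1 = 2*(n:ℤ) := by push_cast; ring
    have e4 : ((2*n+1:ℕ):ℤ) = 2*(n:ℤ)+1 := by push_cast; ring
    have e5 : ((2*n:ℕ):ℤ) = 2*(n:ℤ) := by push_cast; ring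
    rw [e2, e1] at hu
    rw [e3, e4] at hv
    push_cast at hu hv
    rw [← hu, ← hv]
    have hxo : x (2*(n:ℤ)) ≠ 0 := by have := hxn (2*n); rwa [e5] at this
    have hyo : y (2*(n:ℤ)+1) ≠ 0 := by have := hyn (2*n+1); rwa [e4] at this
    field_simp
  have hy0 : y 0 ≠ 0 := hy 0 (by norm_num)
  intro n
  induction n with
  | zero => norm_num
  | succ n ih =>
    obtain ⟨ih1, ih2⟩ := ih
    have hDu1 := (hU (2*n+1)).1
    have hDv1 := (hV (2*n)).1
    have hDu2 := (hU (2*n+2)).1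
    have hDv2 := (hV (2*n+1)).1
    push_cast at hDu1 hDv1 hDu2 hDv2
    rw [hv0] at hDv1 hDv2
    have hv0ne : v0 ≠ 0 := by rw [hv0]; exact mul_ne_zero hxm1 hy0
    have H2 : ∀ (A B C Du Dv : ℝ), B ≠ 0 → C ≠ 0 → Du ≠ 0 → Dv ≠ 0 →
        (A / Du) / ((B * C) / Dv) = B⁻¹ * (A / C) * (Dv / Du) := by
      intro A B C Du Dv hB hC hDu hDv
      field_simp
    have H3 : ∀ (A B C Du Dv : ℝ), B ≠ 0 → Du ≠ 0 → Dv ≠ 0 →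
        (A * C / Du) / (B / Dv) = A * (C / B) * (Dv / Du) := by
      intro A B C Du Dv hB hDu hDv
      field_simp
    constructor
    · have key2 : u0 / (1 + (2*(n:ℝ)+1)*b*u0) / (v0 / (1 + 2*(n:ℝ)*d*v0)) =
          (x (-1))⁻¹ * (u0 / y 0) *
            ((1 + 2*(n:ℝ)*d*(x (-1) * y 0)) / (1 + (2*(n:ℝ)+1)*b*u0)) := by
        rw [hv0]
        exact H2 _ _ _ _ _ hxm1 hy0 hDu1 hDv1
      rw [show 2*((n+1:ℕ):ℤ)-1 = 2*(n:ℤ)+1 from by push_cast; ring, hodd n, ih1,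
        show (1:ℤ)-((n+1:ℕ):ℤ) = (1-(n:ℤ))-1 from by push_cast; ring,
        zpow_sub_one₀ hxm1, Finset.prod_range_succ, pow_succ, key2]
      ring
    · have key3 : u0 / (1 + (2*(n:ℝ)+2)*b*u0) / (v0 / (1 + (2*(n:ℝ)+1)*d*v0)) =
          x 0 * (y (-1) / v0) *
            ((1 + (2*(n:ℝ)+1)*d*v0) / (1 + (2*(n:ℝ)+2)*b*u0)) := by
        conv_lhs => rw [hu0]
        exact H3 _ _ _ _ _ hv0ne (by rw [hu0] at hDu2; exact hDu2) hDv2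
      rw [show 2*((n+1:ℕ):ℤ) = 2*(n:ℤ)+2 from by push_cast; ring, heven n, ih2,
        Finset.prod_range_succ, pow_succ (x 0), pow_succ, key3]
      simp only [hv0]
      ring
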